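/- Let 0<q<1 and φ₁,φ₂ ∈ [0,2π). Define on ℓ²(ℤ₊): Z₂² = CS, Z₂¹ = e^{iφ₁} d(q), Z₁² = e^{iφ₂} d(q), Z₁¹ = −e^{i(φ₁+φ₂)} q^{-1} S*C (where S is the shift, C eₙ = (1−q^{2n})^{1/2} eₙ, d(q) eₙ = qⁿ eₙ). Then these operators satisfy Σ_{j=1}^{2} q^{4−α−β} Z_j^α (Z_j^β)* = δ^{αβ} I for all α,β ∈ {1,2}. -/

import Mathlib

/-- The operators of the representation ρ_{φ₁,φ₂} of Pol(Mat₂)_q,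
`Z₂² = CS`, `Z₂¹ = e^{iφ₁} d(q)`, `Z₁² = e^{iφ₂} d(q)`, `Z₁¹ = −e^{i(φ₁+φ₂)} q^{-1} S*C`,
satisfy `Σ_{j=1}^{2} q^{4−α−β} Z_j^α (Z_j^β)* = δ^{αβ} I` for all α,β ∈ {1,2}
(i.e. they annihilate the generators of the boundary ideal J). -/
theorem stmt8 {H : Type*} [NormedAddCommGroup H] [InnerProductSpace ℂ H] [CompleteSpace H]
    (q : ℝ) (hq0 : 0 < q) (hq1 : q < 1)
    (φ₁ φ₂ : ℝ) (hφ₁ : φ₁ ∈ Set.Ico 0 (2 * Real.pi)) (hφ₂ : φ₂ ∈ Set.Ico 0 (2 * Real.pi))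
    (e : HilbertBasis ℕ ℂ H)
    (S C D : H →L[ℂ] H)
    (hS : ∀ n : ℕ, S (e n) = e (n + 1))
    (hC : ∀ n : ℕ, C (e n) = ((Real.sqrt (1 - q ^ (2 * n)) : ℝ) : ℂ) • e n)
    (hD : ∀ n : ℕ, D (e n) = ((q ^ n : ℝ) : ℂ) • e n)
    (Z11 Z12 Z21 Z22 : H →L[ℂ] H)
    (hZ22 : Z22 = C * S)
    (hZ21 : Z21 = Complex.exp (φ₁ * Complex.I) • D)
    (hZ12 : Z12 = Complex.exp (φ₂ * Complex.I) • D)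
    (hZ11 : Z11 = (-Complex.exp ((φ₁ + φ₂) * Complex.I) * ((q⁻¹ : ℝ) : ℂ)) •
      (ContinuousLinearMap.adjoint S * C)) :
    ((q ^ 2 : ℝ) : ℂ) • (Z11 * ContinuousLinearMap.adjoint Z11
        + Z21 * ContinuousLinearMap.adjoint Z21) = 1
    ∧ ((q : ℝ) : ℂ) • (Z11 * ContinuousLinearMap.adjoint Z12
        + Z21 * ContinuousLinearMap.adjoint Z22) = 0
    ∧ ((q : ℝ) : ℂ) • (Z12 * ContinuousLinearMap.adjoint Z11
        + Z22 * ContinuousLinearMap.adjoint Z21) = 0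
    ∧ (Z12 * ContinuousLinearMap.adjoint Z12
        + Z22 * ContinuousLinearMap.adjoint Z22) = 1 := by
  classical
  have hqC : (q : ℂ) * ((q : ℂ))⁻¹ = 1 :=
    mul_inv_cancel₀ (by exact_mod_cast hq0.ne')
  have hle : ∀ k : ℕ, (0:ℝ) ≤ 1 - q ^ k := fun k =>
    sub_nonneg.mpr (pow_le_one₀ hq0.le hq1.le)
  have hsqC : ∀ k : ℕ, ((Real.sqrt (1 - q ^ k) : ℝ) : ℂ) * ((Real.sqrt (1 - q ^ k) : ℝ) : ℂ)
      = 1 - (q : ℂ) ^ k := by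
    intro k
    rw [← Complex.ofReal_mul, Real.mul_self_sqrt (hle k)]
    push_cast
    ring
  have hee : ∀ i j : ℕ, (inner ℂ (e i) (e j) : ℂ) = if i = j then 1 else 0 :=
    orthonormal_iff_ite.mp e.orthonormal
  have vext : ∀ x y : H, (∀ i, (inner ℂ (e i) x : ℂ) = inner ℂ (e i) y) → x = y := by
    intro x y h
    apply e.repr.injective
    ext i
    rw [e.repr_apply_apply, e.repr_apply_apply]
    exact h i
  have key : ∀ f g : H →L[ℂ] H, (∀ n, f (e n) = g (e n)) → f = g := by
    intro f g h
    refine ContinuousLinearMap.ext_on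
      (Submodule.dense_iff_topologicalClosure_eq_top.mpr e.dense_span) ?_
    rintro x ⟨n, rfl⟩
    exact h n
  have hS0 : ContinuousLinearMap.adjoint S (e 0) = 0 := by
    apply vext; intro i
    rw [ContinuousLinearMap.adjoint_inner_right, hS, hee, inner_zero_right]
    simp
  have hSn : ∀ n, ContinuousLinearMap.adjoint S (e (n+1)) = e n := by
    intro n; apply vext; intro i
    rw [ContinuousLinearMap.adjoint_inner_right, hS, hee, hee]
    simp
  have hCadj : ContinuousLinearMap.adjoint C = C := by
    apply key; intro n; apply vext; intro i
    rw [ContinuousLinearMap.adjoint_inner_right]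
    simp only [hC, inner_smul_left, inner_smul_right, hee, Complex.conj_ofReal]
    by_cases h : i = n
    · subst h; rfl
    · simp [h]
  have hDadj : ContinuousLinearMap.adjoint D = D := by
    apply key; intro n; apply vext; intro i
    rw [ContinuousLinearMap.adjoint_inner_right]
    simp only [hD, inner_smul_left, inner_smul_right, hee, Complex.conj_ofReal]
    by_cases h : i = n
    · subst h; rfl
    · simp [h]
  have hadj_smul : ∀ (w : ℂ) (A : H →L[ℂ] H), ContinuousLinearMap.adjoint (w • A)
      = (starRingEnd ℂ) w • ContinuousLinearMap.adjoint A := fun w A =>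
    map_smulₛₗ ContinuousLinearMap.adjoint w A
  have hadj_mul : ∀ A B : H →L[ℂ] H, ContinuousLinearMap.adjoint (A * B)
      = ContinuousLinearMap.adjoint B * ContinuousLinearMap.adjoint A :=
    fun A B => ContinuousLinearMap.adjoint_comp A B
  have hZ11adj : ContinuousLinearMap.adjoint Z11
      = (starRingEnd ℂ) (-Complex.exp ((φ₁ + φ₂) * Complex.I) * ((q⁻¹ : ℝ) : ℂ)) • (C * S) := by
    rw [hZ11, hadj_smul, hadj_mul, hCadj, ContinuousLinearMap.adjoint_adjoint]
  have hZ22adj : ContinuousLinearMap.adjoint Z22 = ContinuousLinearMap.adjoint S * C := by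
    rw [hZ22, hadj_mul, hCadj]
  have hZ21adj : ContinuousLinearMap.adjoint Z21
      = (starRingEnd ℂ) (Complex.exp (φ₁ * Complex.I)) • D := by
    rw [hZ21, hadj_smul, hDadj]
  have hZ12adj : ContinuousLinearMap.adjoint Z12
      = (starRingEnd ℂ) (Complex.exp (φ₂ * Complex.I)) • D := by
    rw [hZ12, hadj_smul, hDadj]
  have hstar : ∀ θ : ℝ, (starRingEnd ℂ) (Complex.exp ((θ : ℂ) * Complex.I))
      = Complex.exp (-((θ : ℂ) * Complex.I)) := by
    intro θ
    rw [← Complex.exp_conj, map_mul, Complex.conj_ofReal, Complex.conj_I, mul_neg]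
  have hmulexp : ∀ θ : ℝ, Complex.exp ((θ : ℂ) * Complex.I)
      * Complex.exp (-((θ : ℂ) * Complex.I)) = 1 := by
    intro θ
    rw [← Complex.exp_add, add_neg_cancel, Complex.exp_zero]
  have hsum : Complex.exp (((φ₁ : ℂ) + (φ₂ : ℂ)) * Complex.I)
      = Complex.exp ((φ₁ : ℂ) * Complex.I) * Complex.exp ((φ₂ : ℂ) * Complex.I) := by
    rw [← Complex.exp_add]; congr 1; ring
  refine ⟨?_, ?_, ?_, ?_⟩
  · rw [hZ11adj, hZ21adj, hZ11, hZ21]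
    apply key; intro n
    simp only [ContinuousLinearMap.smul_apply, ContinuousLinearMap.add_apply,
      ContinuousLinearMap.mul_apply, ContinuousLinearMap.one_apply, map_smul,
      hS, hC, hD, hSn, smul_smul, smul_add]
    rw [← add_smul]
    convert one_smul ℂ (e n) using 2
    have h4 := hmulexp φ₁
    have h5 := hmulexp φ₂
    have h6 := hsqC (2 * (n + 1))
    simp only [hsum, map_neg, map_mul, Complex.conj_ofReal, hstar]
    push_cast
    linear_combination
      ((q:ℂ)^2 * ((q:ℂ)⁻¹)^2 * ((Real.sqrt (1 - q ^ (2*(n+1))) : ℝ) : ℂ)^2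
          * Complex.exp ((φ₂ : ℂ) * Complex.I) * Complex.exp (-((φ₂ : ℂ) * Complex.I))
        + (q:ℂ)^2 * ((q:ℂ)^n)^2) * h4
      + (q:ℂ)^2 * ((q:ℂ)⁻¹)^2 * ((Real.sqrt (1 - q ^ (2*(n+1))) : ℝ) : ℂ)^2 * h5
      + (q:ℂ)^2 * ((q:ℂ)⁻¹)^2 * h6
      + ((q:ℂ) * ((q:ℂ))⁻¹ + 1) * (1 - (q:ℂ)^(2*(n+1))) * hqC
  · rw [hZ12adj, hZ22adj, hZ11, hZ21]
    apply key; intro n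
    rcases n with _ | m
    · simp [hS0, hC, hD, hS]
    · simp only [ContinuousLinearMap.smul_apply, ContinuousLinearMap.add_apply,
        ContinuousLinearMap.mul_apply, ContinuousLinearMap.zero_apply, map_smul,
        hS, hC, hD, hSn, smul_smul, smul_add]
      rw [← add_smul]
      convert zero_smul ℂ (e m) using 2
      have h5 := hmulexp φ₂
      simp only [hsum, map_neg, map_mul, Complex.conj_ofReal, hstar]
      push_cast
      linear_combination
        (-(q:ℂ)^(m+2) * ((q:ℂ))⁻¹ * ((Real.sqrt (1 - q ^ (2*(m+1))) : ℝ) : ℂ)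
            * Complex.exp ((φ₁ : ℂ) * Complex.I)) * h5
        + (-(q:ℂ)^(m+1) * ((Real.sqrt (1 - q ^ (2*(m+1))) : ℝ) : ℂ)
            * Complex.exp ((φ₁ : ℂ) * Complex.I)) * hqC
  · rw [hZ11adj, hZ21adj, hZ12, hZ22]
    apply key; intro n
    simp only [ContinuousLinearMap.smul_apply, ContinuousLinearMap.add_apply,
      ContinuousLinearMap.mul_apply, ContinuousLinearMap.zero_apply, map_smul,
      hS, hC, hD, hSn, smul_smul, smul_add]
    rw [← add_smul]
    convert zero_smul ℂ (e (n+1)) using 2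
    have h5 := hmulexp φ₂
    simp only [hsum, map_neg, map_mul, Complex.conj_ofReal, hstar]
    push_cast
    linear_combination
      (-(q:ℂ)^(n+2) * ((q:ℂ))⁻¹ * ((Real.sqrt (1 - q ^ (2*(n+1))) : ℝ) : ℂ)
          * Complex.exp (-((φ₁ : ℂ) * Complex.I))) * h5
      + (-(q:ℂ)^(n+1) * ((Real.sqrt (1 - q ^ (2*(n+1))) : ℝ) : ℂ)
          * Complex.exp (-((φ₁ : ℂ) * Complex.I))) * hqC
  · rw [hZ12adj, hZ22adj, hZ12, hZ22]
    apply key; intro n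
    rcases n with _ | m
    · simp only [ContinuousLinearMap.smul_apply, ContinuousLinearMap.add_apply,
        ContinuousLinearMap.mul_apply, ContinuousLinearMap.one_apply, map_smul,
        hS, hC, hD, hS0, smul_smul, smul_add, mul_zero, pow_zero, sub_self,
        Real.sqrt_zero, Complex.ofReal_zero, zero_smul, smul_zero, map_zero, add_zero]
      convert one_smul ℂ (e 0) using 2
      have h5 := hmulexp φ₂
      simp only [hstar]
      push_cast
      linear_combination h5
    · simp only [ContinuousLinearMap.smul_apply, ContinuousLinearMap.add_apply,
        ContinuousLinearMap.mul_apply, ContinuousLinearMap.one_apply, map_smul,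
        hS, hC, hD, hSn, smul_smul, smul_add]
      rw [← add_smul]
      convert one_smul ℂ (e (m+1)) using 2
      have h5 := hmulexp φ₂
      have h6 := hsqC (2 * (m + 1))
      simp only [hstar]
      push_cast
      linear_combination ((q:ℂ)^(m+1))^2 * h5 + h6
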